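/- Let r ≥ 1 and let P be a probability mass function on (Fin 6)^r (r rolls of a six-sided die) that is exchangeable, and suppose that for every integer s ≥ r there exists an exchangeable probability mass function P_s on (Fin 6)^s whose marginal on the first r coordinates equals P (i.e., P(t) = ∑_{u : Fin (s-r) → Fin 6} P_s(t ++ u) for all t). Then there exists a Borel probability measure q on the simplex Θ = {θ ∈ ℝ^6 : θ_i ≥ 0 for all i, ∑_{i=1}^{6} θ_i = 1} such that for every t : Fin r → Fin 6, P(t) = ∫_Θ ∏_{k=1}^{r} θ_{t(k)} dq(θ). -/

import Mathlib

open MeasureTheory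

/-- The standard probability simplex in `ℝ^6`. -/
abbrev Simplex6 : Type := {θ : Fin 6 → ℝ // (∀ i, 0 ≤ θ i) ∧ ∑ i, θ i = 1}


open Finset

noncomputable def dfPhi (r : ℕ) : Simplex6 → ((Fin r → Fin 6) → ℝ) :=
  fun θ t => ∏ k, (θ : Fin 6 → ℝ) (t k)


lemma sum_eq_castLE {β : Type*} [AddCommMonoid β] {c m : ℕ} (h : c ≤ m) (F : Fin m → β)
    (hF : ∀ j : Fin m, ¬ ((j : ℕ) < c) → F j = 0) :
    ∑ j, F j = ∑ i : Fin c, F (Fin.castLE h i) := by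
  classical
  have h2 : ∑ j ∈ (univ.map (Fin.castLEEmb h)), F j = ∑ i : Fin c, F (Fin.castLE h i) :=
    Finset.sum_map _ _ _
  rw [← h2]
  refine (Finset.sum_subset (Finset.subset_univ _) ?_).symm
  intro j _ hj
  apply hF
  intro hlt
  exact hj (Finset.mem_map.2 ⟨⟨(j : ℕ), hlt⟩, Finset.mem_univ _, by
    simp [Fin.castLEEmb, Fin.ext_iff]⟩)

lemma isCompact_convexHull_of_isCompact {E : Type*} [NormedAddCommGroup E] [NormedSpace ℝ E]
    [FiniteDimensional ℝ E] {K : Set E} (hK : IsCompact K) :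
    IsCompact (convexHull ℝ K) := by
  classical
  rcases K.eq_empty_or_nonempty with h | ⟨x₀, hx₀⟩
  · simp [h]
  set m : ℕ := Module.finrank ℝ E + 1 with hm
  set S : Set ((Fin m → ℝ) × (Fin m → E)) :=
    (stdSimplex ℝ (Fin m)) ×ˢ (Set.univ.pi fun _ => K) with hS
  have hScomp : IsCompact S := (isCompact_stdSimplex ℝ _).prod (isCompact_univ_pi fun _ => hK)
  have hg : Continuous fun p : (Fin m → ℝ) × (Fin m → E) => ∑ i, p.1 i • p.2 i := by
    apply continuous_finset_sum
    intro i _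
    exact ((continuous_apply i).comp continuous_fst).smul ((continuous_apply i).comp continuous_snd)
  have himg : IsCompact ((fun p : (Fin m → ℝ) × (Fin m → E) => ∑ i, p.1 i • p.2 i) '' S) :=
    hScomp.image hg
  convert himg using 1
  apply Set.Subset.antisymm
  · intro x hx
    rw [convexHull_eq_union] at hx
    simp only [Set.mem_iUnion] at hx
    obtain ⟨t, hts, hai, hxt⟩ := hx
    have hcard : t.card ≤ m := by
      have h1 := hai.card_le_finrank_succ
      rw [Fintype.card_coe] at h1
      exact h1.trans (Nat.add_le_add_right (Submodule.finrank_le _) 1)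
    rw [Finset.convexHull_eq] at hxt
    obtain ⟨w, hw0, hw1, hwx⟩ := hxt
    rw [Finset.centerMass_eq_of_sum_1 _ _ hw1] at hwx
    simp only [id_eq] at hwx
    set η : Fin t.card → E := fun i => (t.equivFin.symm i : E) with hη
    have hηmem : ∀ i, η i ∈ t := fun i => (t.equivFin.symm i).2
    have hsum_tR : ∀ (G : E → ℝ), ∑ y ∈ t, G y = ∑ i : Fin t.card, G (η i) := by
      intro G
      rw [← Finset.sum_attach t G]
      exact (Equiv.sum_comp t.equivFin.symm fun a => G (a : E)).symm
    have hsum_tE : ∀ (G : E → E), ∑ y ∈ t, G y = ∑ i : Fin t.card, G (η i) := by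
      intro G
      rw [← Finset.sum_attach t G]
      exact (Equiv.sum_comp t.equivFin.symm fun a => G (a : E)).symm
    set w' : Fin m → ℝ := fun j => if h : (j : ℕ) < t.card then w (η ⟨j, h⟩) else 0 with hw'
    set z : Fin m → E := fun j => if h : (j : ℕ) < t.card then η ⟨j, h⟩ else x₀ with hz
    have hw'sum : ∑ j, w' j = 1 := by
      rw [sum_eq_castLE hcard w' (fun j hj => by simp [hw', hj]), ← hw1, hsum_tR w]
      refine Finset.sum_congr rfl fun i _ => ?_
      simp [hw', Fin.castLE]
    have hzsum : ∑ j, w' j • z j = x := by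
      rw [sum_eq_castLE hcard (fun j => w' j • z j)
        (fun j hj => by simp [hw', hj]), ← hwx, hsum_tE (fun y => w y • y)]
      refine Finset.sum_congr rfl fun i _ => ?_
      simp [hw', hz, Fin.castLE]
    refine ⟨(w', z), ⟨⟨fun j => ?_, hw'sum⟩, fun j _ => ?_⟩, hzsum⟩
    · by_cases h : (j : ℕ) < t.card
      · simpa [hw', h] using hw0 _ (hηmem ⟨j, h⟩)
      · simp [hw', h]
    · by_cases h : (j : ℕ) < t.card
      · simpa [hz, h] using hts (hηmem ⟨j, h⟩)
      · simpa [hz, h] using hx₀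
  · rintro x ⟨⟨w, z⟩, ⟨hw, hzK⟩, rfl⟩
    apply (convex_convexHull ℝ K).sum_mem (fun i _ => hw.1 i) hw.2
    intro i _
    exact subset_convexHull ℝ K (hzK i (Set.mem_univ i))



lemma marginal_fiber {r s : ℕ} (hrs : r ≤ s) (P : (Fin r → Fin 6) → ℝ)
    (Ps : (Fin s → Fin 6) → ℝ)
    (hexch : ∀ (σ : Equiv.Perm (Fin s)) (u : Fin s → Fin 6), Ps (u ∘ σ) = Ps u)
    (hmarg : ∀ t : Fin r → Fin 6,
      P t = ∑ u : Fin (s - r) → Fin 6,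
        Ps (Fin.append t u ∘ Fin.cast ((Nat.add_sub_of_le hrs).symm : s = r + (s - r))))
    (f : Fin r → Fin s) (hf : Function.Injective f) (t : Fin r → Fin 6) :
    ∑ v : Fin s → Fin 6, (if v ∘ f = t then Ps v else 0) = P t := by
  classical
  have h : s = r + (s - r) := by omega
  set e : Fin r → Fin s := fun k => Fin.cast h.symm (Fin.castAdd (s - r) k) with he_def
  have he : Function.Injective e := by
    intro a b hab
    have : (a : ℕ) = (b : ℕ) := by simpa [he_def, Fin.ext_iff] using hab
    exact Fin.ext this
  have hback : ∀ v : Fin s → Fin 6, v ∘ e = t →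
      (Fin.append t (fun j => v (Fin.cast h.symm (Fin.natAdd r j))) ∘ Fin.cast h) = v := by
    intro v hv
    funext x
    have key : ∀ y : Fin (r + (s - r)),
        Fin.append t (fun j => v (Fin.cast h.symm (Fin.natAdd r j))) y
          = v (Fin.cast h.symm y) := by
      intro y
      induction y using Fin.addCases with
      | left k =>
        rw [Fin.append_left]
        exact (congrFun hv k).symm
      | right j =>
        rw [Fin.append_right]
    have := key (Fin.cast h x)
    simpa using this
  -- Step A : the statement for `e`
  have stepA : ∑ v : Fin s → Fin 6, (if v ∘ e = t then Ps v else 0) = P t := by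
    rw [hmarg t, ← Finset.sum_filter]
    refine Finset.sum_bij' (fun v _ => fun j => v (Fin.cast h.symm (Fin.natAdd r j)))
      (fun u _ => Fin.append t u ∘ Fin.cast h) ?_ ?_ ?_ ?_ ?_
    · intro v hv
      exact Finset.mem_univ _
    · intro u hu
      simp only [Finset.mem_filter, Finset.mem_univ, true_and]
      funext k
      simp [he_def, Fin.append_left]
    · intro v hv
      simp only [Finset.mem_filter, Finset.mem_univ, true_and] at hv
      exact hback v hv
    · intro u hu
      funext j
      simp [Fin.append_right]
    · intro v hv
      simp only [Finset.mem_filter, Finset.mem_univ, true_and] at hv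
      exact (congrArg Ps (hback v hv)).symm
  -- Step B : transport along a permutation
  set ee : {x // x ∈ Set.range e} ≃ {x // x ∈ Set.range f} :=
    (Equiv.ofInjective e he).symm.trans (Equiv.ofInjective f hf) with hee
  set σ : Equiv.Perm (Fin s) := ee.extendSubtype with hσdef
  have hσ : ∀ k, σ (e k) = f k := by
    intro k
    have h1 : (e k) ∈ Set.range e := ⟨k, rfl⟩
    rw [hσdef, Equiv.extendSubtype_apply_of_mem ee (e k) h1]
    have h2 : (Equiv.ofInjective e he).symm ⟨e k, h1⟩ = k := by
      have h3 : (⟨e k, h1⟩ : {x // x ∈ Set.range e}) = Equiv.ofInjective e he k := by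
        rw [Equiv.ofInjective_apply]
      rw [h3, Equiv.symm_apply_apply]
    simp [hee, Equiv.trans_apply, h2, Equiv.ofInjective_apply]
  have hσe : σ.symm ∘ f = e := by
    funext k
    simp only [Function.comp_apply]
    rw [← hσ k, Equiv.symm_apply_apply]
  have reindex := Equiv.sum_comp (Equiv.arrowCongr σ (Equiv.refl (Fin 6)))
    (fun v : Fin s → Fin 6 => if v ∘ f = t then Ps v else 0)
  rw [← reindex, ← stepA]
  refine Finset.sum_congr rfl fun w _ => ?_
  have harr : (Equiv.arrowCongr σ (Equiv.refl (Fin 6))) w = w ∘ σ.symm := rfl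
  rw [harr]
  have hcomp : (w ∘ σ.symm) ∘ f = w ∘ e := by
    rw [Function.comp_assoc, hσe]
  rw [hcomp, hexch σ.symm w]

lemma approx_lemma {r s : ℕ} (hr : 1 ≤ r) (hrs : r ≤ s)
    (P : (Fin r → Fin 6) → ℝ) (hP0 : ∀ t, 0 ≤ P t) (hP1 : ∑ t, P t = 1)
    (Ps : (Fin s → Fin 6) → ℝ) (hPs0 : ∀ v, 0 ≤ Ps v) (hPs1 : ∑ v, Ps v = 1)
    (hexch : ∀ (σ : Equiv.Perm (Fin s)) (u : Fin s → Fin 6), Ps (u ∘ σ) = Ps u)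
    (hmarg : ∀ t : Fin r → Fin 6,
      P t = ∑ u : Fin (s - r) → Fin 6,
        Ps (Fin.append t u ∘ Fin.cast ((Nat.add_sub_of_le hrs).symm : s = r + (s - r)))) :
    ∃ y : ((Fin r → Fin 6) → ℝ), y ∈ convexHull ℝ (Set.range (dfPhi r)) ∧
      ∀ t, |P t - y t| ≤ (r : ℝ)^2 / s := by
  classical
  have hs1 : 1 ≤ s := hr.trans hrs
  have hspos : (0:ℝ) < s := by exact_mod_cast hs1
  set n : (Fin s → Fin 6) → Fin 6 → ℝ := fun v i => ∑ j, if v j = i then (1:ℝ) else 0 with hn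
  have hn0 : ∀ v i, 0 ≤ n v i := fun v i => Finset.sum_nonneg fun j _ => by positivity
  have hnsum : ∀ v, ∑ i, n v i = s := by
    intro v
    rw [Finset.sum_comm]
    have : ∀ j : Fin s, ∑ i, (if v j = i then (1:ℝ) else 0) = 1 := by
      intro j
      simp [Finset.sum_ite_eq]
    simp [this]
  set Θv : (Fin s → Fin 6) → Simplex6 := fun v =>
    ⟨fun i => n v i / s, fun i => div_nonneg (hn0 v i) hspos.le, by
      rw [← Finset.sum_div, hnsum v, div_self hspos.ne']⟩ with hΘv
  set y : (Fin r → Fin 6) → ℝ := ∑ v, Ps v • dfPhi r (Θv v) with hy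
  have hymem : y ∈ convexHull ℝ (Set.range (dfPhi r)) := by
    apply (convex_convexHull ℝ _).sum_mem (fun v _ => hPs0 v) hPs1
    intro v _
    exact subset_convexHull ℝ _ (Set.mem_range_self _)
  set A : (Fin r → Fin s) → (Fin r → Fin 6) → ℝ :=
    fun f t => ∑ v, if v ∘ f = t then Ps v else 0 with hA
  have hA0 : ∀ f t, 0 ≤ A f t := by
    intro f t
    apply Finset.sum_nonneg
    intro v _
    split
    · exact hPs0 v
    · exact le_refl 0
  have hA1 : ∀ f t, A f t ≤ 1 := by
    intro f t
    rw [← hPs1]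
    apply Finset.sum_le_sum
    intro v _
    split
    · exact le_refl _
    · exact hPs0 v
  have hP01 : ∀ t, P t ≤ 1 := by
    intro t
    rw [← hP1]
    exact Finset.single_le_sum (fun t' _ => hP0 t') (Finset.mem_univ t)
  -- the key counting identity
  have hyA : ∀ t, y t = (∑ f : Fin r → Fin s, A f t) / (s:ℝ)^r := by
    intro t
    have swap : ∑ f : Fin r → Fin s, A f t
        = ∑ v : Fin s → Fin 6, ∑ f : Fin r → Fin s, (if v ∘ f = t then Ps v else 0) :=
      Finset.sum_comm
    have inner : ∀ v : Fin s → Fin 6,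
        ∑ f : Fin r → Fin s, (if v ∘ f = t then Ps v else 0)
          = Ps v * ∏ k, n v (t k) := by
      intro v
      have e1 : ∀ f : Fin r → Fin s, (if v ∘ f = t then Ps v else 0)
          = Ps v * ∏ k, (if v (f k) = t k then (1:ℝ) else 0) := by
        intro f
        rw [Finset.prod_boole]
        by_cases hc : v ∘ f = t
        · rw [if_pos hc, if_pos, mul_one]
          intro k _
          exact congrFun hc k
        · rw [if_neg hc, if_neg, mul_zero]
          intro hall
          exact hc (funext fun k => hall k (Finset.mem_univ k))
      rw [Finset.sum_congr rfl fun f _ => e1 f, ← Finset.mul_sum]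
      congr 1
      rw [← Fintype.prod_sum (fun k (j : Fin s) => if v j = t k then (1:ℝ) else 0)]
    calc y t = ∑ v : Fin s → Fin 6, Ps v * ((∏ k, n v (t k)) / (s:ℝ)^r) := by
          rw [hy, Finset.sum_apply]
          refine Finset.sum_congr rfl fun v _ => ?_
          simp only [Pi.smul_apply, smul_eq_mul, dfPhi, hΘv]
          rw [Finset.prod_div_distrib, Finset.prod_const, Finset.card_univ, Fintype.card_fin]
      _ = (∑ v : Fin s → Fin 6, Ps v * ∏ k, n v (t k)) / (s:ℝ)^r := by
          rw [Finset.sum_div]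
          exact Finset.sum_congr rfl fun v _ => (mul_div_assoc _ _ _).symm
      _ = (∑ f : Fin r → Fin s, A f t) / (s:ℝ)^r := by
          rw [swap]
          congr 1
          exact (Finset.sum_congr rfl fun v _ => inner v).symm
  have hpair : ∀ a b : Fin r, a ≠ b →
      (univ.filter fun f : Fin r → Fin s => f a = f b).card ≤ s^(r-1) := by
    intro a b hne
    rw [← Fintype.card_subtype]
    have hinj : Function.Injective
        (fun (f : {f : Fin r → Fin s // f a = f b}) (j : {j : Fin r // j ≠ b}) => f.1 j.1) := by
      intro f g hfg
      apply Subtype.ext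
      funext j
      by_cases hj : j = b
      · subst hj
        rw [← f.2, ← g.2]
        exact congrFun hfg ⟨a, hne⟩
      · exact congrFun hfg ⟨j, hj⟩
    calc Fintype.card {f : Fin r → Fin s // f a = f b}
        ≤ Fintype.card ({j : Fin r // j ≠ b} → Fin s) := Fintype.card_le_of_injective _ hinj
      _ = s ^ (r - 1) := by
          rw [Fintype.card_fun, Fintype.card_fin]
          congr 1
          rw [Fintype.card_subtype_compl, Fintype.card_subtype_eq, Fintype.card_fin]
  have h1 : (univ.filter fun f : Fin r → Fin s => ¬ Function.Injective f).card
      ≤ r^2 * s^(r-1) := by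
    have hsub : (univ.filter fun f : Fin r → Fin s => ¬ Function.Injective f)
        ⊆ univ.offDiag.biUnion (fun p => univ.filter fun f : Fin r → Fin s => f p.1 = f p.2) := by
      intro f hf
      rw [Finset.mem_filter, Function.not_injective_iff] at hf
      obtain ⟨a, b, hab, hne⟩ := hf.2
      exact Finset.mem_biUnion.2 ⟨(a, b), Finset.mem_offDiag.2 ⟨mem_univ _, mem_univ _, hne⟩,
        Finset.mem_filter.2 ⟨mem_univ _, hab⟩⟩
    calc (univ.filter fun f : Fin r → Fin s => ¬ Function.Injective f).card
        ≤ (univ.offDiag.biUnion fun p =>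
            univ.filter fun f : Fin r → Fin s => f p.1 = f p.2).card :=
          Finset.card_le_card hsub
      _ ≤ ∑ p ∈ univ.offDiag, (univ.filter fun f : Fin r → Fin s => f p.1 = f p.2).card :=
          Finset.card_biUnion_le
      _ ≤ ∑ _p ∈ (univ : Finset (Fin r)).offDiag, s^(r-1) :=
          Finset.sum_le_sum fun p hp => hpair p.1 p.2 (Finset.mem_offDiag.1 hp).2.2
      _ = (univ : Finset (Fin r)).offDiag.card * s^(r-1) := by
          rw [Finset.sum_const, smul_eq_mul]
      _ ≤ r^2 * s^(r-1) := by
          apply Nat.mul_le_mul_right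
          rw [Finset.offDiag_card, Finset.card_univ, Fintype.card_fin]
          calc r * r - r ≤ r * r := Nat.sub_le _ _
            _ = r ^ 2 := (sq r).symm
  have hNle : ((univ.filter fun f : Fin r → Fin s => ¬ Function.Injective f).card : ℝ)
      ≤ (r:ℝ)^2 * (s:ℝ)^(r-1) := by exact_mod_cast h1
  refine ⟨y, hymem, fun t => ?_⟩
  have hsr : (0:ℝ) < (s:ℝ)^r := by positivity
  have hcardf : (Finset.univ : Finset (Fin r → Fin s)).card = s ^ r := by
    rw [Finset.card_univ, Fintype.card_fun, Fintype.card_fin, Fintype.card_fin]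
  have key : P t - y t = (∑ f : Fin r → Fin s, (P t - A f t)) / (s:ℝ)^r := by
    rw [hyA t, Finset.sum_sub_distrib, Finset.sum_const, hcardf, nsmul_eq_mul, sub_div]
    congr 1
    push_cast
    field_simp
  have h2 : |∑ f : Fin r → Fin s, (P t - A f t)| ≤ (r:ℝ)^2 * (s:ℝ)^(r-1) := by
    calc |∑ f : Fin r → Fin s, (P t - A f t)| ≤ ∑ f : Fin r → Fin s, |P t - A f t| :=
          Finset.abs_sum_le_sum_abs _ _
      _ ≤ ∑ f : Fin r → Fin s, (if Function.Injective f then (0:ℝ) else 1) := by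
          apply Finset.sum_le_sum
          intro f _
          by_cases hf : Function.Injective f
          · rw [if_pos hf]
            have hAf : A f t = P t := marginal_fiber hrs P Ps hexch hmarg f hf t
            rw [hAf]
            simp
          · rw [if_neg hf, abs_le]
            constructor
            · linarith [hP0 t, hA1 f t]
            · linarith [hP01 t, hA0 f t]
      _ = ((univ.filter fun f : Fin r → Fin s => ¬ Function.Injective f).card : ℝ) := by
          rw [Finset.sum_ite, Finset.sum_const, Finset.sum_const]
          simp
      _ ≤ (r:ℝ)^2 * (s:ℝ)^(r-1) := hNle
  rw [key, abs_div, abs_of_pos hsr]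
  have hb : (0:ℝ) < (s:ℝ)^(r-1) := by positivity
  have heq : ((r:ℝ)^2 * (s:ℝ)^(r-1)) / (s:ℝ)^r = (r:ℝ)^2 / s := by
    rw [show (s:ℝ)^r = (s:ℝ)^(r-1) * s by rw [← pow_succ]; congr 1; omega]
    rw [mul_comm ((r:ℝ)^2) ((s:ℝ)^(r-1)), mul_div_mul_left _ _ hb.ne']
  calc |∑ f : Fin r → Fin s, (P t - A f t)| / (s:ℝ)^r
      ≤ ((r:ℝ)^2 * (s:ℝ)^(r-1)) / (s:ℝ)^r := by
        gcongr
    _ = (r:ℝ)^2 / s := heq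

/-- **Classical de Finetti representation theorem** (Proposition 1):
an infinitely exchangeable probability mass function on `r` rolls of a
six-sided die is a mixture of i.i.d. product distributions. -/
theorem deFinetti_infinite_exchangeable
    (r : ℕ) (hr : 1 ≤ r) (P : (Fin r → Fin 6) → ℝ)
    (hPnonneg : ∀ t, 0 ≤ P t) (hPsum : ∑ t, P t = 1)
    (hPexch : ∀ (σ : Equiv.Perm (Fin r)) (t : Fin r → Fin 6), P (t ∘ σ) = P t)
    (hext : ∀ (s : ℕ) (hs : r ≤ s),
      ∃ Ps : (Fin s → Fin 6) → ℝ,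
        (∀ u, 0 ≤ Ps u) ∧ (∑ u, Ps u = 1) ∧
        (∀ (σ : Equiv.Perm (Fin s)) (u : Fin s → Fin 6), Ps (u ∘ σ) = Ps u) ∧
        (∀ t : Fin r → Fin 6,
          P t = ∑ u : Fin (s - r) → Fin 6,
            Ps (Fin.append t u ∘ Fin.cast (by omega : s = r + (s - r))))) :
    ∃ q : Measure Simplex6, IsProbabilityMeasure q ∧
      ∀ t : Fin r → Fin 6,
        P t = ∫ θ : Simplex6, ∏ k : Fin r, (θ : Fin 6 → ℝ) (t k) ∂q := by
  classical
  haveI : BorelSpace Simplex6 :=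
    Subtype.borelSpace {θ : Fin 6 → ℝ | (∀ i, 0 ≤ θ i) ∧ ∑ i, θ i = 1}
  haveI : MeasurableSingletonClass Simplex6 :=
    Subtype.instMeasurableSingletonClass
  haveI hcompS : CompactSpace Simplex6 :=
    isCompact_iff_compactSpace.mp (isCompact_stdSimplex ℝ (Fin 6))
  have hφcont : Continuous (dfPhi r) := by
    apply continuous_pi
    intro t
    exact continuous_finset_prod _ fun k _ => (continuous_apply (t k)).comp continuous_subtype_val
  have hrange : IsCompact (Set.range (dfPhi r)) := isCompact_range hφcont
  have hhull : IsCompact (convexHull ℝ (Set.range (dfPhi r))) :=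
    isCompact_convexHull_of_isCompact hrange
  have hclosed := hhull.isClosed
  have hPmem : P ∈ convexHull ℝ (Set.range (dfPhi r)) := by
    rw [← hclosed.closure_eq, Metric.mem_closure_iff]
    intro ε hε
    obtain ⟨m, hm⟩ := exists_nat_gt ((r:ℝ)^2 / (ε/2))
    set s := max r (max 1 m) with hs
    have hrs : r ≤ s := le_max_left _ _
    have hs1 : 1 ≤ s := le_trans (le_max_left 1 m) (le_max_right _ _)
    have hms : m ≤ s := le_trans (le_max_right 1 m) (le_max_right _ _)
    obtain ⟨Ps, hPs0, hPs1, hexch, hmarg⟩ := hext s hrs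
    obtain ⟨y, hymem, hbound⟩ := approx_lemma hr hrs P hPnonneg hPsum Ps hPs0 hPs1 hexch hmarg
    refine ⟨y, hymem, ?_⟩
    have hdist : dist P y ≤ (r:ℝ)^2 / s := by
      rw [dist_pi_le_iff (by positivity)]
      intro t
      rw [Real.dist_eq]
      exact hbound t
    have hs0 : (0:ℝ) < s := by exact_mod_cast hs1
    have hmR : ((r:ℝ)^2) < m * (ε/2) := by
      rw [div_lt_iff₀ (by linarith)] at hm
      exact hm
    have hmsR : (m:ℝ) ≤ s := by exact_mod_cast hms
    have hslt : (r:ℝ)^2 / s < ε := by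
      rw [div_lt_iff₀ hs0]
      nlinarith [sq_nonneg (r:ℝ)]
    linarith
  rw [_root_.convexHull_eq] at hPmem
  obtain ⟨ι, T, w, z, hw0, hw1, hz, hcm⟩ := hPmem
  rw [Finset.centerMass_eq_of_sum_1 _ _ hw1] at hcm
  choose θf hθf using fun (i : T) => hz i i.2
  set q : Measure Simplex6 :=
    ∑ i ∈ T.attach, (ENNReal.ofReal (w i)) • Measure.dirac (θf i) with hq
  have hprob : IsProbabilityMeasure q := by
    constructor
    rw [hq, Measure.finset_sum_apply]
    have : ∀ i ∈ T.attach, ((ENNReal.ofReal (w (i : ι))) • Measure.dirac (θf i)) Set.univ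
        = ENNReal.ofReal (w (i : ι)) := by
      intro i _
      rw [Measure.smul_apply, smul_eq_mul, measure_univ, mul_one]
    rw [Finset.sum_congr rfl this, ← ENNReal.ofReal_sum_of_nonneg (fun i _ => hw0 i.1 i.2)]
    rw [Finset.sum_attach T w, hw1, ENNReal.ofReal_one]
  refine ⟨q, hprob, fun t => ?_⟩
  set f : Simplex6 → ℝ := fun θ => ∏ k : Fin r, (θ : Fin 6 → ℝ) (t k) with hf
  have hfc : Continuous f :=
    continuous_finset_prod _ fun k _ => (continuous_apply (t k)).comp continuous_subtype_val
  have hfint : ∀ a : Simplex6, Integrable f (Measure.dirac a) := by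
    intro a
    refine ⟨hfc.stronglyMeasurable.aestronglyMeasurable, ?_⟩
    rw [HasFiniteIntegral, lintegral_dirac]
    exact ENNReal.coe_lt_top
  have hint : ∀ i ∈ T.attach,
      Integrable f ((ENNReal.ofReal (w (i : ι))) • Measure.dirac (θf i)) := by
    intro i _
    exact (hfint (θf i)).smul_measure ENNReal.ofReal_ne_top
  rw [hq]
  rw [integral_finset_sum_measure hint]
  have hterm : ∀ i ∈ T.attach,
      ∫ θ, f θ ∂((ENNReal.ofReal (w (i : ι))) • Measure.dirac (θf i))
        = w (i : ι) * z (i : ι) t := by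
    intro i _
    rw [integral_smul_measure, integral_dirac, ENNReal.toReal_ofReal (hw0 i.1 i.2)]
    have : f (θf i) = z (i : ι) t := by
      rw [hf, ← hθf i]
      rfl
    rw [this, smul_eq_mul]
  rw [Finset.sum_congr rfl hterm, Finset.sum_attach T (fun i => w i * z i t)]
  have : (∑ i ∈ T, w i • z i) t = ∑ i ∈ T, w i * z i t := by
    rw [Finset.sum_apply]
    rfl
  rw [← this, hcm]
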